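/- Let k ≥ 3 and n ≥ 2⌈log₂(k−1)⌉ + 4. If A is a k-wise eventown on [n] with |A| > (3/4)·2^⌊n/2⌋ + (k−1)n, then there exist disjoint 2-element subsets B_1, ..., B_{⌊n/2⌋} of [n] such that: if n is even, every member of A is a union of some of the B_i; and if n is odd, letting i* be the element not covered by the B_j, every member of A is either a union of some of the B_j, or is of the form C ∪ {i*} with C a union of some of the B_j, and at most k−1 members of A are of the latter form. -/

import Mathlib

set_option maxHeartbeats 1000000

open Finset Module

namespace KWE

variable {n : ℕ}

/-- characteristic vector -/
def phi (A : Finset (Fin n)) : Fin n → ZMod 2 := fun i => if i ∈ A then 1 else 0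

lemma phi_apply (A : Finset (Fin n)) (i : Fin n) : phi A i = if i ∈ A then 1 else 0 := rfl

lemma phi_injective : Function.Injective (phi (n := n)) := by
  intro A B h
  ext i
  have := congrFun h i
  simp only [phi] at this
  by_cases hA : i ∈ A <;> by_cases hB : i ∈ B <;> simp [hA, hB] at this ⊢

lemma phi_inter (A B : Finset (Fin n)) : phi (A ∩ B) = phi A * phi B := by
  funext i
  simp only [phi, Pi.mul_apply, mem_inter]
  by_cases hA : i ∈ A <;> by_cases hB : i ∈ B <;> simp [hA, hB]

lemma phi_union_of_disjoint {A B : Finset (Fin n)} (h : Disjoint A B) :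
    phi (A ∪ B) = phi A + phi B := by
  funext i
  simp only [phi, Pi.add_apply, mem_union]
  by_cases hA : i ∈ A <;> by_cases hB : i ∈ B
  · exact absurd (h.forall_ne_finset hA hB) (by simp)
  all_goals simp [hA, hB]

lemma phi_sdiff {A C : Finset (Fin n)} (h : C ⊆ A) : phi (A \ C) = phi A + phi C := by
  funext i
  simp only [phi, Pi.add_apply, mem_sdiff]
  by_cases hC : i ∈ C
  · simp [hC, h hC]; decide
  · by_cases hA : i ∈ A <;> simp [hA, hC]

/-- parity weight as card cast -/
lemma sum_phi (A : Finset (Fin n)) : (∑ i, phi A i) = (A.card : ZMod 2) := by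
  rw [← Finset.sum_filter_add_sum_filter_not Finset.univ (· ∈ A) (phi A)]
  have h1 : ∀ i ∈ Finset.univ.filter (· ∈ A), phi A i = 1 := by
    intro i hi; simp only [mem_filter] at hi; simp [phi, hi.2]
  have h0 : ∀ i ∈ Finset.univ.filter (¬ · ∈ A), phi A i = 0 := by
    intro i hi; simp only [mem_filter] at hi; simp [phi, hi.2]
  rw [Finset.sum_congr rfl h1, Finset.sum_congr rfl h0, Finset.sum_const, Finset.sum_const]
  simp [Finset.filter_mem_eq_inter]



def beta {n : ℕ} : LinearMap.BilinForm (ZMod 2) (Fin n → ZMod 2) :=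
  LinearMap.mk₂ (ZMod 2) (fun x y => ∑ i, x i * y i)
    (fun x x' y => by simp [add_mul, Finset.sum_add_distrib])
    (fun c x y => by simp [Finset.mul_sum, mul_assoc])
    (fun x y y' => by simp [mul_add, Finset.sum_add_distrib])
    (fun c x y => by
      simp only [Finset.mul_sum, smul_eq_mul, Pi.smul_apply]
      exact Finset.sum_congr rfl fun i _ => by ring)

lemma beta_apply (x y : Fin n → ZMod 2) : beta x y = ∑ i, x i * y i := rfl

lemma beta_comm (x y : Fin n → ZMod 2) : beta x y = beta y x := by
  simp only [beta_apply]
  exact Finset.sum_congr rfl fun i _ => mul_comm _ _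

lemma beta_isRefl : (beta (n := n)).IsRefl := by
  intro x y h
  rw [beta_comm] at h; exact h

lemma beta_nondegenerate : (beta (n := n)).Nondegenerate := by
  have hl : ∀ x : Fin n → ZMod 2, (∀ y, beta x y = 0) → x = 0 := by
    intro x hx
    funext i
    have := hx (Pi.single i 1)
    rw [beta_apply] at this
    simpa [Pi.single_apply, Finset.sum_ite_eq'] using this
  exact ⟨hl, fun y hy => hl y (fun x => by rw [beta_comm]; exact hy x)⟩

lemma beta_phi (A B : Finset (Fin n)) : beta (phi A) (phi B) = ((A ∩ B).card : ZMod 2) := by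
  rw [beta_apply, ← sum_phi (A ∩ B), phi_inter]
  rfl

lemma even_card_iff (A : Finset (Fin n)) : Even A.card ↔ ((A.card : ZMod 2) = 0) := by
  rw [ZMod.natCast_eq_zero_iff]
  exact even_iff_two_dvd

lemma beta_phi_eq_zero_iff (A B : Finset (Fin n)) :
    beta (phi A) (phi B) = 0 ↔ Even (A ∩ B).card := by
  rw [beta_phi, even_card_iff]



lemma zmod2_cases (x : ZMod 2) : x = 0 ∨ x = 1 := by
  fin_cases x
  · exact Or.inl rfl
  · exact Or.inr rfl

lemma odd_cast {m : ℕ} (h : ¬ Even m) : (m : ZMod 2) = 1 := by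
  rcases zmod2_cases (m : ZMod 2) with h0 | h1
  · rw [ZMod.natCast_eq_zero_iff] at h0
    exact absurd (even_iff_two_dvd.mpr h0) h
  · exact h1

lemma clean {n : ℕ} (k : ℕ) (hk : 1 ≤ k) :
    ∀ (F : Finset (Finset (Fin n))) (U : Submodule (ZMod 2) (Fin n → ZMod 2)),
      (∀ S ⊆ F, S.card = k → Even (S.inf id).card) →
      (∀ A ∈ F, ∀ u ∈ U, beta (phi A) u = 0) →
      ∃ Bf ⊆ F,
        (∀ S ⊆ Bf, S.Nonempty → S.card ≤ k - 1 → Even (S.inf id).card) ∧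
        F.card ≤ Bf.card + (k-1) * (n - finrank (ZMod 2) U) := by
  intro F
  induction F using Finset.strongInductionOn with
  | _ F IH =>
  intro U hkw horth
  classical
  by_cases hgood : ∀ S ⊆ F, S.Nonempty → S.card ≤ k - 1 → Even (S.inf id).card
  · exact ⟨F, le_refl F, hgood, Nat.le_add_right _ _⟩
  push_neg at hgood
  set 𝔖 := F.powerset.filter
      (fun S => S.Nonempty ∧ S.card ≤ k - 1 ∧ ¬ Even (S.inf id).card) with h𝔖
  have h𝔖ne : 𝔖.Nonempty := by
    obtain ⟨S, hS1, hS2, hS3, hS4⟩ := hgood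
    exact ⟨S, Finset.mem_filter.mpr ⟨Finset.mem_powerset.mpr hS1, hS2, hS3, hS4⟩⟩
  obtain ⟨S, hSmem, hSmax⟩ := Finset.exists_max_image 𝔖 Finset.card h𝔖ne
  rw [h𝔖, Finset.mem_filter, Finset.mem_powerset] at hSmem
  obtain ⟨hSF, hSne, hScard, hSodd⟩ := hSmem
  set T := S.inf id with hT
  -- evenness of extensions
  have hext : ∀ A ∈ F, A ∉ S → Even (A ∩ T).card := by
    intro A hAF hAS
    have hins : (insert A S).inf id = A ∩ T := by
      rw [Finset.inf_insert]; rfl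
    have hcard : (insert A S).card = S.card + 1 := Finset.card_insert_of_notMem hAS
    have hsub : insert A S ⊆ F := Finset.insert_subset hAF hSF
    by_cases hck : S.card + 1 = k
    · have := hkw (insert A S) hsub (by rw [hcard, hck])
      rwa [hins] at this
    · -- card ≤ k - 1, use maximality
      by_contra hodd
      have hmem : insert A S ∈ 𝔖 := by
        rw [h𝔖, Finset.mem_filter, Finset.mem_powerset]
        refine ⟨hsub, Finset.insert_nonempty _ _, ?_, by rwa [hins]⟩
        · have hSpos : 1 ≤ S.card := Finset.card_pos.mpr hSne
          rw [hcard]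
          omega
      have := hSmax _ hmem
      rw [hcard] at this; omega
  obtain ⟨A₁, hA₁⟩ := hSne
  have hSne : S.Nonempty := ⟨A₁, hA₁⟩
  have hTsubA₁ : T ⊆ A₁ := by
    have h := Finset.inf_le (s := S) (f := id) hA₁
    exact h
  have hbeta1 : beta (phi A₁) (phi T) = 1 := by
    rw [beta_phi, Finset.inter_eq_right.mpr hTsubA₁]
    exact odd_cast hSodd
  have hphiTU : phi T ∉ U := by
    intro hmem
    have := horth A₁ (hSF hA₁) (phi T) hmem
    rw [hbeta1] at this
    exact one_ne_zero this
  set U' := U ⊔ Submodule.span (ZMod 2) {phi T} with hU'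
  have hUU' : U < U' := by
    refine lt_of_le_of_ne le_sup_left ?_
    intro h
    exact hphiTU (h ▸ (le_sup_right (a := U)) (Submodule.mem_span_singleton_self _))
  have hrank : finrank (ZMod 2) U < finrank (ZMod 2) U' :=
    Submodule.finrank_lt_finrank_of_lt hUU'
  have hrankn : finrank (ZMod 2) U' ≤ n := by
    have := Submodule.finrank_le U'
    simpa using this
  set F' := F \ S with hF'
  have hF'ss : F' ⊂ F := Finset.sdiff_ssubset hSF hSne
  have horth' : ∀ A ∈ F', ∀ u ∈ U', beta (phi A) u = 0 := by
    intro A hAF' u hu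
    rw [hU', Submodule.mem_sup] at hu
    obtain ⟨u₁, hu₁, u₂, hu₂, rfl⟩ := hu
    rw [Submodule.mem_span_singleton] at hu₂
    obtain ⟨c, rfl⟩ := hu₂
    rw [map_add, map_smul]
    rw [Finset.mem_sdiff] at hAF'
    have h1 := horth A hAF'.1 u₁ hu₁
    have h2 : beta (phi A) (phi T) = 0 := by
      rw [beta_phi, ← even_card_iff]
      exact hext A hAF'.1 hAF'.2
    rw [h1, h2]
    simp
  have hkw' : ∀ S' ⊆ F', S'.card = k → Even (S'.inf id).card :=
    fun S' hS' hc => hkw S' (hS'.trans (Finset.sdiff_subset)) hc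
  obtain ⟨Bf, hBfF', hBfgood, hBfcard⟩ := IH F' hF'ss U' hkw' horth'
  refine ⟨Bf, hBfF'.trans Finset.sdiff_subset, hBfgood, ?_⟩
  have hFcard : F.card = F'.card + S.card := by
    rw [hF', Finset.card_sdiff_of_subset hSF]
    have := Finset.card_le_card hSF
    omega
  have hk1 : S.card ≤ k - 1 := hScard
  -- arithmetic
  have h1 : finrank (ZMod 2) U < n := lt_of_lt_of_le hrank hrankn
  have key : (k-1) * (n - finrank (ZMod 2) U') + (k-1) ≤ (k-1) * (n - finrank (ZMod 2) U) := by
    have : n - finrank (ZMod 2) U' + 1 ≤ n - finrank (ZMod 2) U := by omega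
    calc (k-1) * (n - finrank (ZMod 2) U') + (k-1)
        = (k-1) * (n - finrank (ZMod 2) U' + 1) := by ring
      _ ≤ (k-1) * (n - finrank (ZMod 2) U) := Nat.mul_le_mul_left _ this
  omega



section Span

variable {n : ℕ} {s : Set (Fin n → ZMod 2)}

/-- orthogonality passes to spans -/
lemma orth_span {t : Fin n → ZMod 2} (h : ∀ y ∈ s, beta t y = 0) :
    ∀ x ∈ Submodule.span (ZMod 2) s, beta t x = 0 := by
  intro x hx
  have hle : Submodule.span (ZMod 2) s ≤ LinearMap.ker (beta t) :=
    Submodule.span_le.mpr (fun y hy => LinearMap.mem_ker.mpr (h y hy))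
  exact LinearMap.mem_ker.mp (hle hx)

lemma span_even (h : ∀ y ∈ s, beta 1 y = 0) :
    ∀ x ∈ Submodule.span (ZMod 2) s, beta 1 x = 0 := orth_span h

lemma span_isotropic (h : ∀ a ∈ s, ∀ b ∈ s, beta a b = 0) :
    ∀ x ∈ Submodule.span (ZMod 2) s, ∀ y ∈ Submodule.span (ZMod 2) s, beta x y = 0 := by
  have h1 : ∀ a ∈ s, ∀ y ∈ Submodule.span (ZMod 2) s, beta a y = 0 :=
    fun a ha => orth_span (h a ha)
  intro x hx y hy
  exact orth_span (fun a ha => by rw [beta_comm]; exact h1 a ha x hx) y hy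

lemma span_triple (h : ∀ a ∈ s, ∀ b ∈ s, ∀ c ∈ s, beta (a * b) c = 0) :
    ∀ x ∈ Submodule.span (ZMod 2) s, ∀ y ∈ Submodule.span (ZMod 2) s,
      ∀ z ∈ Submodule.span (ZMod 2) s, beta (x * y) z = 0 := by
  have hA : ∀ a ∈ s, ∀ b ∈ s, ∀ z ∈ Submodule.span (ZMod 2) s, beta (a * b) z = 0 :=
    fun a ha b hb => orth_span (h a ha b hb)
  have hB : ∀ a ∈ s, ∀ z ∈ Submodule.span (ZMod 2) s,
      ∀ y ∈ Submodule.span (ZMod 2) s, beta (a * y) z = 0 := by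
    intro a ha z hz y hy
    have hle : Submodule.span (ZMod 2) s ≤
        LinearMap.ker ((beta.flip z).comp (LinearMap.mulLeft (ZMod 2) a)) :=
      Submodule.span_le.mpr (fun b hb => LinearMap.mem_ker.mpr (by
        simp only [LinearMap.comp_apply, LinearMap.mulLeft_apply, LinearMap.flip_apply]
        exact hA a ha b hb z hz))
    have := LinearMap.mem_ker.mp (hle hy)
    exact this
  intro x hx y hy z hz
  have hle : Submodule.span (ZMod 2) s ≤
      LinearMap.ker ((beta.flip z).comp (LinearMap.mulRight (ZMod 2) y)) :=
    Submodule.span_le.mpr (fun a ha => LinearMap.mem_ker.mpr (by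
      simp only [LinearMap.comp_apply, LinearMap.mulRight_apply, LinearMap.flip_apply]
      exact hB a ha z hz y hy))
  have := LinearMap.mem_ker.mp (hle hx)
  exact this

end Span



section Structure

variable {n : ℕ}

lemma phi_sup_sum {ι : Type*} (S : Finset ι) (f : ι → Finset (Fin n))
    (hdisj : ∀ a ∈ S, ∀ b ∈ S, a ≠ b → Disjoint (f a) (f b)) :
    phi (S.sup f) = ∑ a ∈ S, phi (f a) := by
  classical
  induction S using Finset.induction_on with
  | empty =>
    simp only [Finset.sup_empty, Finset.sum_empty]
    funext i
    simp [phi]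
  | @insert a S ha IH =>
    rw [Finset.sup_insert, Finset.sum_insert ha]
    have hd : Disjoint (f a) (S.sup f) := by
      rw [Finset.disjoint_sup_right]
      intro b hb
      exact hdisj a (Finset.mem_insert_self a S) b (Finset.mem_insert_of_mem hb)
        (fun h => ha (h ▸ hb))
    rw [show (f a ⊔ S.sup f) = f a ∪ S.sup f from rfl, phi_union_of_disjoint hd,
      IH (fun x hx y hy hxy => hdisj x (Finset.mem_insert_of_mem hx) y
        (Finset.mem_insert_of_mem hy) hxy)]

end Structure



lemma phi_support {n : ℕ} (x : Fin n → ZMod 2) :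
    phi (Finset.univ.filter (fun i => x i = 1)) = x := by
  classical
  funext i
  rcases zmod2_cases (x i) with h | h <;>
    simp [phi, h]

theorem structure_thm {n : ℕ} (V : Submodule (ZMod 2) (Fin n → ZMod 2))
    (heven : ∀ x ∈ V, beta 1 x = 0)
    (hmul : ∀ x ∈ V, ∀ y ∈ V, x * y ∈ V)
    (hrank : finrank (ZMod 2) V = n / 2) :
    ∃ B : Fin (n / 2) → Finset (Fin n),
      (∀ i, (B i).card = 2) ∧
      (∀ i j, i ≠ j → Disjoint (B i) (B j)) ∧
      (∀ i, phi (B i) ∈ V) ∧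
      (∀ x ∈ V, ∃ S : Finset (Fin (n / 2)), x = phi (S.sup B)) ∧
      ((Finset.univ.sup B : Finset (Fin n)) = (Finset.univ.filter
        (fun i : Fin n => ∃ j, i ∈ B j))) := by
  classical
  set d := n / 2 with hd
  -- even cardinality of members
  have hVeven : ∀ A : Finset (Fin n), phi A ∈ V → Even A.card := by
    intro A hA
    have h := heven (phi A) hA
    rw [beta_comm] at h
    have h1 : (1 : Fin n → ZMod 2) = phi Finset.univ := by
      funext i; simp [phi]
    rw [h1, beta_phi, Finset.inter_univ, ← even_card_iff] at h
    exact h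
  -- atom predicate
  set IsAt : Finset (Fin n) → Prop :=
    fun a => phi a ∈ V ∧ a.Nonempty ∧
      ∀ a', phi a' ∈ V → a' ⊆ a → a' = ∅ ∨ a' = a with hIsAt
  have exists_atom : ∀ (m : ℕ) (A : Finset (Fin n)), A.card ≤ m → phi A ∈ V →
      A.Nonempty → ∃ a, IsAt a ∧ a ⊆ A := by
    intro m
    induction m with
    | zero => intro A hA _ hne; rw [Nat.le_zero, Finset.card_eq_zero] at hA
              exact absurd hA hne.ne_empty
    | succ m IH =>
      intro A hA hAV hne
      by_cases hat : ∀ a', phi a' ∈ V → a' ⊆ A → a' = ∅ ∨ a' = A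
      · exact ⟨A, ⟨hAV, hne, hat⟩, Finset.Subset.refl A⟩
      · push_neg at hat
        obtain ⟨A', hA'V, hA'A, hA'ne, hA'neq⟩ := hat
        have hss : A' ⊂ A := Finset.ssubset_iff_subset_ne.mpr ⟨hA'A, hA'neq⟩
        obtain ⟨a, ha, haA'⟩ := IH A' (by
          have := Finset.card_lt_card hss
          omega) hA'V hA'ne
        exact ⟨a, ha, haA'.trans hA'A⟩
  -- atoms are pairwise disjoint
  have hdisj : ∀ a b, IsAt a → IsAt b → a ≠ b → Disjoint a b := by
    intro a b ha hb hab
    have hiV : phi (a ∩ b) ∈ V := by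
      rw [phi_inter]; exact hmul _ ha.1 _ hb.1
    rcases ha.2.2 (a ∩ b) hiV Finset.inter_subset_left with h | h
    · exact Finset.disjoint_iff_inter_eq_empty.mpr h
    · -- a ∩ b = a, so a ⊆ b
      have hab' : a ⊆ b := by
        rw [← h]; exact Finset.inter_subset_right
      rcases hb.2.2 a ha.1 hab' with h' | h'
      · exact absurd h' ha.2.1.ne_empty
      · exact absurd h' hab
  -- decomposition into atoms
  have decomp : ∀ (m : ℕ) (A : Finset (Fin n)), A.card ≤ m → phi A ∈ V →
      ∃ 𝒮 : Finset (Finset (Fin n)), (∀ a ∈ 𝒮, IsAt a) ∧ A = 𝒮.sup id := by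
    intro m
    induction m with
    | zero =>
      intro A hA hAV
      rw [Nat.le_zero, Finset.card_eq_zero] at hA
      exact ⟨∅, by simp, by simp [hA]⟩
    | succ m IH =>
      intro A hA hAV
      by_cases hne : A.Nonempty
      · obtain ⟨a, haAt, haA⟩ := exists_atom (m+1) A hA hAV hne
        have haV := haAt.1
        have hA'V : phi (A \ a) ∈ V := by
          rw [phi_sdiff haA]
          exact Submodule.add_mem V hAV haV
        have hcard : (A \ a).card ≤ m := by
          have h1 := Finset.card_sdiff_of_subset haA
          have h2 := Finset.card_pos.mpr haAt.2.1
          have h3 := Finset.card_le_card haA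
          omega
        obtain ⟨𝒮, h𝒮, hsup⟩ := IH (A \ a) hcard hA'V
        refine ⟨insert a 𝒮, ?_, ?_⟩
        · intro b hb
          rcases Finset.mem_insert.mp hb with h | h
          · exact h ▸ haAt
          · exact h𝒮 b h
        · rw [Finset.sup_insert, ← hsup]
          have h2 : (id a : Finset (Fin n)) ⊔ (A \ a) = a ∪ (A \ a) := rfl
          rw [h2, Finset.union_sdiff_of_subset haA]
      · rw [Finset.not_nonempty_iff_eq_empty] at hne
        exact ⟨∅, by simp, by simp [hne]⟩
  set 𝒯 : Finset (Finset (Fin n)) := Finset.univ.powerset.filter IsAt with h𝒯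
  have h𝒯mem : ∀ a, a ∈ 𝒯 ↔ IsAt a := by
    intro a; rw [h𝒯, Finset.mem_filter, Finset.mem_powerset]
    exact ⟨fun h => h.2, fun h => ⟨Finset.subset_univ a, h⟩⟩
  have h𝒯disj : ∀ a ∈ 𝒯, ∀ b ∈ 𝒯, a ≠ b → Disjoint a b := by
    intro a ha b hb hab
    exact hdisj a b ((h𝒯mem a).mp ha) ((h𝒯mem b).mp hb) hab
  have hdecomp𝒯 : ∀ x ∈ V, ∃ 𝒮 ⊆ 𝒯, x = phi (𝒮.sup id) := by
    intro x hx
    set A := Finset.univ.filter (fun i => x i = 1) with hA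
    have hphiA : phi A = x := phi_support x
    obtain ⟨𝒮, h𝒮at, hsup⟩ := decomp A.card A le_rfl (by rw [hphiA]; exact hx)
    exact ⟨𝒮, fun a ha => (h𝒯mem a).mpr (h𝒮at a ha), by rw [← hphiA, hsup]⟩
  have hspan : V ≤ Submodule.span (ZMod 2) ((𝒯.image phi : Finset (Fin n → ZMod 2)) : Set _) := by
    intro x hx
    obtain ⟨𝒮, h𝒮𝒯, hx'⟩ := hdecomp𝒯 x hx
    rw [hx', phi_sup_sum 𝒮 id (fun a ha b hb hab => h𝒯disj a (h𝒮𝒯 ha) b (h𝒮𝒯 hb) hab)]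
    apply Submodule.sum_mem
    intro a ha
    apply Submodule.subset_span
    rw [Finset.coe_image]
    exact ⟨a, h𝒮𝒯 ha, rfl⟩
  have hcard𝒯 : d ≤ 𝒯.card := by
    have h1 : finrank (ZMod 2) (Submodule.span (ZMod 2)
        ((𝒯.image phi : Finset (Fin n → ZMod 2)) : Set (Fin n → ZMod 2))) ≤ (𝒯.image phi).card := by
      exact finrank_span_finset_le_card (𝒯.image phi)
    have h2 : finrank (ZMod 2) V ≤
        finrank (ZMod 2) (Submodule.span (ZMod 2)
          ((𝒯.image phi : Finset (Fin n → ZMod 2)) : Set (Fin n → ZMod 2))) :=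
      Submodule.finrank_mono hspan
    have h3 := Finset.card_image_le (s := 𝒯) (f := phi)
    omega
  have hsum : ∑ a ∈ 𝒯, a.card ≤ n := by
    have h1 : (𝒯.biUnion id).card = ∑ a ∈ 𝒯, a.card :=
      Finset.card_biUnion (fun a ha b hb hab => h𝒯disj a ha b hb hab)
    have h2 : (𝒯.biUnion id).card ≤ n := by
      have := Finset.card_le_univ (𝒯.biUnion id)
      simpa using this
    omega
  have h2le : ∀ a ∈ 𝒯, 2 ≤ a.card := by
    intro a ha
    have hat := (h𝒯mem a).mp ha
    have h1 := Finset.card_pos.mpr hat.2.1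
    obtain ⟨c, hc⟩ := hVeven a hat.1
    omega
  have h𝒯card : 𝒯.card = d := by
    have h1 : 2 * 𝒯.card ≤ ∑ a ∈ 𝒯, a.card := by
      calc 2 * 𝒯.card = ∑ _a ∈ 𝒯, 2 := by rw [Finset.sum_const]; ring
        _ ≤ ∑ a ∈ 𝒯, a.card := Finset.sum_le_sum h2le
    omega
  have hcard2 : ∀ a ∈ 𝒯, a.card = 2 := by
    intro a₀ ha₀
    by_contra hne
    have h4 : 4 ≤ a₀.card := by
      obtain ⟨c, hc⟩ := hVeven a₀ ((h𝒯mem a₀).mp ha₀).1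
      have := h2le a₀ ha₀
      omega
    have hrest : 2 * (𝒯.card - 1) ≤ ∑ a ∈ 𝒯.erase a₀, a.card := by
      calc 2 * (𝒯.card - 1) = ∑ _a ∈ 𝒯.erase a₀, 2 := by
            rw [Finset.sum_const, Finset.card_erase_of_mem ha₀]; ring
        _ ≤ _ := Finset.sum_le_sum (fun a ha => h2le a (Finset.mem_of_mem_erase ha))
    have hsplit : ∑ a ∈ 𝒯, a.card = a₀.card + ∑ a ∈ 𝒯.erase a₀, a.card :=
      (Finset.add_sum_erase 𝒯 _ ha₀).symm
    have hTpos : 1 ≤ 𝒯.card := Finset.card_pos.mpr ⟨a₀, ha₀⟩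
    omega
  -- build B
  have hcard' : Fintype.card ↥𝒯 = d := by rw [Fintype.card_coe]; exact h𝒯card
  set e : Fin (Fintype.card ↥𝒯) ≃ ↥𝒯 := (Fintype.equivFin ↥𝒯).symm with he
  set B : Fin d → Finset (Fin n) := fun i => (e (Fin.cast hcard'.symm i) : Finset (Fin n)) with hB
  have hBmem : ∀ i, B i ∈ 𝒯 := fun i => (e (Fin.cast hcard'.symm i)).2
  have hBinj : Function.Injective B := by
    intro i j hij
    have h1 : e (Fin.cast hcard'.symm i) = e (Fin.cast hcard'.symm j) := Subtype.ext hij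
    have h2 := e.injective h1
    exact Fin.cast_injective _ h2
  have hBsurj : ∀ a ∈ 𝒯, ∃ i, B i = a := by
    intro a ha
    refine ⟨Fin.cast hcard' (e.symm ⟨a, ha⟩), ?_⟩
    rw [hB]
    simp
  refine ⟨B, fun i => hcard2 _ (hBmem i), fun i j hij => h𝒯disj _ (hBmem i) _ (hBmem j)
    (fun h => hij (hBinj h)), fun i => ((h𝒯mem _).mp (hBmem i)).1, ?_, ?_⟩
  · intro x hx
    obtain ⟨𝒮, h𝒮𝒯, hx'⟩ := hdecomp𝒯 x hx
    refine ⟨Finset.univ.filter (fun i => B i ∈ 𝒮), ?_⟩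
    rw [hx']
    have hsup_eq : 𝒮.sup id = (Finset.univ.filter (fun i => B i ∈ 𝒮)).sup B := by
      apply le_antisymm
      · apply Finset.sup_le
        intro a ha
        obtain ⟨i, hi⟩ := hBsurj a (h𝒮𝒯 ha)
        have hiS : i ∈ Finset.univ.filter (fun i => B i ∈ 𝒮) := by
          rw [Finset.mem_filter]; exact ⟨Finset.mem_univ i, hi ▸ ha⟩
        have h5 := Finset.le_sup (f := B) hiS
        rw [hi] at h5
        exact h5
      · apply Finset.sup_le
        intro i hi
        rw [Finset.mem_filter] at hi
        exact Finset.le_sup (f := id) hi.2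
    rw [hsup_eq]
  · ext i
    rw [Finset.mem_filter]
    simp only [Finset.mem_univ, true_and]
    rw [Finset.mem_sup]
    constructor
    · rintro ⟨j, _, hj⟩; exact ⟨j, hj⟩
    · rintro ⟨j, hj⟩; exact ⟨j, Finset.mem_univ j, hj⟩



lemma beta_one_one {n : ℕ} : beta (1 : Fin n → ZMod 2) 1 = (n : ZMod 2) := by
  rw [beta_apply]
  simp

lemma mem_of_orth {n : ℕ} (V : Submodule (ZMod 2) (Fin n → ZMod 2))
    (heven : ∀ x ∈ V, beta 1 x = 0)
    (hiso : ∀ x ∈ V, ∀ y ∈ V, beta x y = 0)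
    (hrank : finrank (ZMod 2) V = n / 2)
    (x : Fin n → ZMod 2) (hx : ∀ y ∈ V, beta x y = 0) (hxeven : beta 1 x = 0) :
    x ∈ V := by
  set d := n / 2 with hd
  set Vp := beta.orthogonal V with hVp
  have hrankVp : finrank (ZMod 2) Vp = n - d := by
    rw [hVp, LinearMap.BilinForm.finrank_orthogonal beta_nondegenerate V, hrank]
    congr 1
    simp [Module.finrank_pi]
  have hxVp : x ∈ Vp := by
    rw [hVp, LinearMap.BilinForm.mem_orthogonal_iff]
    intro y hy
    rw [beta_comm]
    exact hx y hy
  set W := Vp ⊓ LinearMap.ker (beta (1 : Fin n → ZMod 2)) with hW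
  have hVW : V ≤ W := by
    intro v hv
    rw [hW, Submodule.mem_inf]
    constructor
    · rw [hVp, LinearMap.BilinForm.mem_orthogonal_iff]
      intro y hy
      exact hiso y hy v hv
    · exact LinearMap.mem_ker.mpr (heven v hv)
  have hWV : W = V := by
    rcases Nat.even_or_odd n with hpar | hpar
    · -- n even : Vp = V
      have h1 : n - d = d := by
        rcases hpar with ⟨c, hc⟩
        omega
      have hVVp : V = Vp := by
        apply Submodule.eq_of_le_of_finrank_le
        · intro v hv
          rw [hVp, LinearMap.BilinForm.mem_orthogonal_iff]
          intro y hy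
          exact hiso y hy v hv
        · rw [hrankVp, hrank, h1]
      apply le_antisymm
      · rw [hW, hVVp]
        exact inf_le_left
      · exact hVW
    · -- n odd
      have h1 : n - d = d + 1 := by
        rcases hpar with ⟨c, hc⟩
        omega
      have hWne : W ≠ Vp := by
        intro hWVp
        have hone : (1 : Fin n → ZMod 2) ∈ beta.orthogonal Vp := by
          rw [LinearMap.BilinForm.mem_orthogonal_iff]
          intro y hy
          rw [beta_comm]
          have : y ∈ W := hWVp ▸ hy
          rw [hW, Submodule.mem_inf] at this
          exact LinearMap.mem_ker.mp this.2
        rw [LinearMap.BilinForm.orthogonal_orthogonal beta_nondegenerate beta_isRefl] at hone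
        have := heven 1 hone
        rw [beta_one_one] at this
        rw [Nat.odd_iff] at hpar
        have hcast : (n : ZMod 2) = 1 := odd_cast (by rw [Nat.even_iff]; omega)
        rw [hcast] at this
        exact one_ne_zero this
      have hWlt : W < Vp := lt_of_le_of_ne inf_le_left hWne
      have hfr : finrank (ZMod 2) W < n - d := by
        have := Submodule.finrank_lt_finrank_of_lt hWlt
        omega
      have hle : finrank (ZMod 2) W ≤ finrank (ZMod 2) V := by omega
      exact (Submodule.eq_of_le_of_finrank_le hVW hle).symm
  rw [← hWV, hW, Submodule.mem_inf]
  exact ⟨hxVp, LinearMap.mem_ker.mpr hxeven⟩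



section MoreOrth

variable {n : ℕ}

lemma card_even_of {V : Submodule (ZMod 2) (Fin n → ZMod 2)}
    (heven : ∀ x ∈ V, beta 1 x = 0) {A : Finset (Fin n)} (hA : phi A ∈ V) :
    Even A.card := by
  have h := heven (phi A) hA
  rw [beta_comm] at h
  have h1 : (1 : Fin n → ZMod 2) = phi Finset.univ := by
    funext i; simp [phi]
  rw [h1, beta_phi, Finset.inter_univ, ← even_card_iff] at h
  exact h

lemma rank_ge_of_card {F : Finset (Finset (Fin n))} {r : ℕ}
    (h : 2 ^ r < F.card) :
    r < finrank (ZMod 2) (Submodule.span (ZMod 2) (phi '' (F : Set (Finset (Fin n))))) := by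
  classical
  set W := Submodule.span (ZMod 2) (phi '' (F : Set (Finset (Fin n)))) with hW
  have : Fintype ↥W := Fintype.ofFinite _
  have hcard : Fintype.card ↥W = 2 ^ finrank (ZMod 2) W := by
    have := card_eq_pow_finrank (K := ZMod 2) (V := ↥W)
    rwa [ZMod.card 2] at this
  have hinj : F.card ≤ Fintype.card ↥W := by
    have hf : ∀ a : {x // x ∈ F}, phi a.1 ∈ W :=
      fun a => Submodule.subset_span ⟨a.1, a.2, rfl⟩
    have := Fintype.card_le_of_injective
      (fun a : {x // x ∈ F} => (⟨phi a.1, hf a⟩ : ↥W))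
      (fun a b hab => Subtype.ext (phi_injective (congrArg Subtype.val hab)))
    rwa [Fintype.card_coe] at this
  by_contra hle
  push_neg at hle
  have : (2:ℕ) ^ finrank (ZMod 2) W ≤ 2 ^ r := Nat.pow_le_pow_right (by norm_num) hle
  omega

lemma mem_of_orth_even {V : Submodule (ZMod 2) (Fin n → ZMod 2)}
    (hiso : ∀ x ∈ V, ∀ y ∈ V, beta x y = 0)
    (hrank : finrank (ZMod 2) V = n / 2) (hpar : Even n)
    (x : Fin n → ZMod 2) (hx : ∀ y ∈ V, beta x y = 0) : x ∈ V := by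
  have hVVp : V = beta.orthogonal V := by
    apply Submodule.eq_of_le_of_finrank_le
    · intro v hv
      rw [LinearMap.BilinForm.mem_orthogonal_iff]
      intro y hy
      exact hiso y hy v hv
    · rw [LinearMap.BilinForm.finrank_orthogonal beta_nondegenerate V, hrank]
      have h2 : finrank (ZMod 2) (Fin n → ZMod 2) = n := by simp [Module.finrank_pi]
      rw [h2]
      rcases hpar with ⟨c, hc⟩
      omega
  rw [hVVp, LinearMap.BilinForm.mem_orthogonal_iff]
  intro y hy
  rw [beta_comm]
  exact hx y hy

lemma beta_single (istar : Fin n) (y : Fin n → ZMod 2) :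
    beta (Pi.single istar (1 : ZMod 2)) y = y istar := by
  rw [beta_apply]
  simp [Pi.single_apply, Finset.sum_ite_eq']

lemma mem_of_orth_odd {V : Submodule (ZMod 2) (Fin n → ZMod 2)}
    (hiso : ∀ x ∈ V, ∀ y ∈ V, beta x y = 0)
    (hrank : finrank (ZMod 2) V = n / 2) (hpar : Odd n)
    (istar : Fin n) (hist : ∀ v ∈ V, v istar = 0)
    (x : Fin n → ZMod 2) (hx : ∀ y ∈ V, beta x y = 0) (hxi : x istar = 0) :
    x ∈ V := by
  classical
  set d := n / 2 with hd
  set e : Fin n → ZMod 2 := Pi.single istar 1 with he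
  set Vp := beta.orthogonal V with hVp
  have hrankVp : finrank (ZMod 2) Vp = d + 1 := by
    rw [hVp, LinearMap.BilinForm.finrank_orthogonal beta_nondegenerate V, hrank]
    have h2 : finrank (ZMod 2) (Fin n → ZMod 2) = n := by simp [Module.finrank_pi]
    rw [h2]
    rcases hpar with ⟨c, hc⟩
    omega
  set V' := V ⊔ Submodule.span (ZMod 2) {e} with hV'
  have heV : e ∉ V := by
    intro hmem
    have := hist e hmem
    rw [he] at this
    simp at this
  have hV'le : V' ≤ Vp := by
    rw [hV']
    apply sup_le
    · intro v hv
      rw [hVp, LinearMap.BilinForm.mem_orthogonal_iff]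
      intro y hy
      exact hiso y hy v hv
    · rw [Submodule.span_le, hVp]
      intro z hz
      rw [Set.mem_singleton_iff] at hz
      subst hz
      rw [SetLike.mem_coe, LinearMap.BilinForm.mem_orthogonal_iff]
      intro y hy
      rw [beta_comm, he, beta_single]
      exact hist y hy
  have hVV' : V < V' := by
    refine lt_of_le_of_ne le_sup_left ?_
    intro hEq
    exact heV (hEq ▸ (le_sup_right (a := V)) (Submodule.mem_span_singleton_self e))
  have hV'eq : V' = Vp := by
    apply Submodule.eq_of_le_of_finrank_le hV'le
    rw [hrankVp]
    have h1 : finrank (ZMod 2) V < finrank (ZMod 2) V' :=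
      Submodule.finrank_lt_finrank_of_lt hVV'
    omega
  have hxVp : x ∈ Vp := by
    rw [hVp, LinearMap.BilinForm.mem_orthogonal_iff]
    intro y hy
    rw [beta_comm]
    exact hx y hy
  rw [← hV'eq, hV', Submodule.mem_sup] at hxVp
  obtain ⟨v, hv, z, hz, rfl⟩ := hxVp
  rw [Submodule.mem_span_singleton] at hz
  obtain ⟨c, rfl⟩ := hz
  have happ : v istar + c * e istar = 0 := by
    have := hxi
    simpa using this
  rw [hist v hv, he] at happ
  simp at happ
  rcases zmod2_cases c with hc | hc
  · rw [hc]
    simpa using hv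
  · rw [hc] at happ
    simp at happ

end MoreOrth



lemma beta_one_mul {n : ℕ} (x y : Fin n → ZMod 2) : beta 1 (x * y) = beta x y := by
  simp [beta_apply]

lemma beta_one_phi {n : ℕ} (A : Finset (Fin n)) : beta 1 (phi A) = (A.card : ZMod 2) := by
  have h1 : (1 : Fin n → ZMod 2) = phi Finset.univ := by
    funext i; simp [phi]
  rw [h1, beta_phi, Finset.univ_inter]

lemma inf3 {n : ℕ} (A Bb C : Finset (Fin n)) :
    ({A, Bb, C} : Finset (Finset (Fin n))).inf id = A ∩ (Bb ∩ C) := by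
  classical
  rw [show ({A, Bb, C} : Finset (Finset (Fin n))) = insert A (insert Bb {C}) from rfl,
    Finset.inf_insert, Finset.inf_insert, Finset.inf_singleton]
  rfl

lemma inf2 {n : ℕ} (A Bb : Finset (Fin n)) :
    ({A, Bb} : Finset (Finset (Fin n))).inf id = A ∩ Bb := by
  classical
  rw [show ({A, Bb} : Finset (Finset (Fin n))) = insert A {Bb} from rfl,
    Finset.inf_insert, Finset.inf_singleton]
  rfl

lemma inf_insert_istar {n : ℕ} {V : Submodule (ZMod 2) (Fin n → ZMod 2)}
    (hmulV : ∀ x ∈ V, ∀ y ∈ V, x * y ∈ V) (istar : Fin n) :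
    ∀ (S' : Finset (Finset (Fin n))), S'.Nonempty →
      (∀ A ∈ S', ∃ C : Finset (Fin n), phi C ∈ V ∧ istar ∉ C ∧ A = insert istar C) →
      ∃ R : Finset (Fin n), phi R ∈ V ∧ istar ∉ R ∧ S'.inf id = insert istar R := by
  intro S' hne
  induction hne using Finset.Nonempty.cons_induction with
  | singleton a =>
    intro hmem
    obtain ⟨C, hCV, hCi, hC⟩ := hmem a (Finset.mem_singleton_self a)
    exact ⟨C, hCV, hCi, by rw [Finset.inf_singleton]; exact hC⟩
  | cons a s ha hs IH =>
    intro hmem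
    obtain ⟨R, hRV, hRi, hR⟩ := IH (fun A hA => hmem A (Finset.mem_cons_of_mem hA))
    obtain ⟨C, hCV, hCi, hC⟩ := hmem a (Finset.mem_cons_self a s)
    refine ⟨C ∩ R, by rw [phi_inter]; exact hmulV _ hCV _ hRV,
      fun h => hCi (Finset.mem_inter.mp h).1, ?_⟩
    rw [Finset.inf_cons, hR, hC]
    ext i
    simp only [Finset.mem_inter, Finset.mem_insert, id, Finset.inf_eq_inter]
    tauto

end KWE

open KWE Finset Module

/-- Stability theorem for k-wise eventowns (k ≥ 3). -/
theorem kwise_eventown_stability (n k : ℕ) (hk : 3 ≤ k)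
    (hn : 2 * Nat.clog 2 (k - 1) + 4 ≤ n)
    (𝒜 : Finset (Finset (Fin n)))
    (hkwise : ∀ S : Finset (Finset (Fin n)), S ⊆ 𝒜 → S.card = k → Even (S.inf id).card)
    (hsize : (3 : ℚ) / 4 * 2 ^ (n / 2) + ((k : ℚ) - 1) * n < (𝒜.card : ℚ)) :
    ∃ B : Fin (n / 2) → Finset (Fin n),
      (∀ i, (B i).card = 2) ∧
      (∀ i j, i ≠ j → Disjoint (B i) (B j)) ∧
      (Even n → ∀ A ∈ 𝒜, ∃ S : Finset (Fin (n / 2)), A = S.sup B) ∧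
      (Odd n → ∃ istar : Fin n,
        (∀ j, istar ∉ B j) ∧
        (∀ A ∈ 𝒜, (∃ S : Finset (Fin (n / 2)), A = S.sup B) ∨
          (∃ S : Finset (Fin (n / 2)), A = insert istar (S.sup B))) ∧
        (𝒜.filter fun A => istar ∈ A).card ≤ k - 1) := by
  classical
  have hk1 : 1 ≤ k := by omega
  set d := n / 2 with hd
  have hclog : 1 ≤ Nat.clog 2 (k - 1) := Nat.clog_pos (by norm_num) (by omega)
  have hn6 : 6 ≤ n := by omega
  have hd3 : 3 ≤ d := by omega
  have hpowk : k - 1 ≤ 2 ^ (d - 2) := by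
    have h1 : k - 1 ≤ 2 ^ Nat.clog 2 (k - 1) := Nat.le_pow_clog (by norm_num) _
    have h2 : Nat.clog 2 (k - 1) ≤ d - 2 := by omega
    exact h1.trans (Nat.pow_le_pow_right (by norm_num) h2)
  have hsizeN : 3 * 2 ^ d + 4 * ((k - 1) * n) < 4 * 𝒜.card := by
    have hcast : ((k - 1 : ℕ) : ℚ) = (k : ℚ) - 1 := by
      push_cast [Nat.cast_sub hk1]
      ring
    have h4 : ((3 * 2 ^ d + 4 * ((k - 1) * n) : ℕ) : ℚ) < ((4 * 𝒜.card : ℕ) : ℚ) := by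
      push_cast [hcast]
      rw [hd]
      push_cast
      linarith
    exact_mod_cast h4
  -- clean
  obtain ⟨ℬ, hℬ𝒜, hℬeven, hℬbound⟩ := clean k hk1 𝒜 ⊥ hkwise
    (by intro A _ u hu; rw [Submodule.mem_bot] at hu; rw [hu, map_zero])
  have hclean : 𝒜.card ≤ ℬ.card + (k - 1) * n := by
    have h := hℬbound
    rw [finrank_bot] at h
    simpa using h
  have hℬbig : 3 * 2 ^ d < 4 * ℬ.card := by omega
  have hℬevenk : ∀ S ⊆ ℬ, S.Nonempty → S.card ≤ k → Even (S.inf id).card := by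
    intro S hS hne hcard
    rcases eq_or_lt_of_le hcard with h | h
    · exact hkwise S (hS.trans hℬ𝒜) h
    · exact hℬeven S hS hne (by omega)
  have hsingle : ∀ A ∈ ℬ, Even A.card := by
    intro A hA
    have := hℬevenk {A} (by simpa using hA) (Finset.singleton_nonempty A) (by simp; omega)
    simpa using this
  have hpair : ∀ A ∈ ℬ, ∀ Bb ∈ ℬ, Even (A ∩ Bb).card := by
    intro A hA Bb hB
    have hsub : ({A, Bb} : Finset (Finset (Fin n))) ⊆ ℬ := by
      intro x hx
      rcases Finset.mem_insert.mp hx with h | h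
      · exact h ▸ hA
      · exact (Finset.mem_singleton.mp h) ▸ hB
    have hcard : ({A, Bb} : Finset (Finset (Fin n))).card ≤ k :=
      le_trans (Finset.card_insert_le _ _) (by simp; omega)
    have := hℬevenk {A, Bb} hsub ⟨A, by simp⟩ hcard
    rwa [inf2] at this
  have htrip : ∀ A ∈ ℬ, ∀ Bb ∈ ℬ, ∀ C ∈ ℬ, Even (A ∩ (Bb ∩ C)).card := by
    intro A hA Bb hB C hC
    have hsub : ({A, Bb, C} : Finset (Finset (Fin n))) ⊆ ℬ := by
      intro x hx
      rcases Finset.mem_insert.mp hx with h | h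
      · exact h ▸ hA
      rcases Finset.mem_insert.mp h with h' | h'
      · exact h' ▸ hB
      · exact (Finset.mem_singleton.mp h') ▸ hC
    have hcard : ({A, Bb, C} : Finset (Finset (Fin n))).card ≤ k :=
      le_trans (Finset.card_insert_le _ _)
        (by
          have := Finset.card_insert_le Bb ({C} : Finset (Finset (Fin n)))
          simp only [Finset.card_singleton] at this ⊢
          omega)
    have := hℬevenk {A, Bb, C} hsub ⟨A, by simp⟩ hcard
    rwa [inf3] at this
  set V := Submodule.span (ZMod 2) (phi '' (ℬ : Set (Finset (Fin n)))) with hV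
  have hgen : ∀ y ∈ phi '' (ℬ : Set (Finset (Fin n))), ∃ Bb ∈ ℬ, y = phi Bb := by
    rintro y ⟨Bb, hB, rfl⟩
    exact ⟨Bb, hB, rfl⟩
  have hQ1 : ∀ x ∈ V, beta 1 x = 0 := by
    apply span_even
    rintro y ⟨Bb, hB, rfl⟩
    rw [beta_one_phi, ← even_card_iff]
    exact hsingle Bb hB
  have hQ2 : ∀ x ∈ V, ∀ y ∈ V, beta x y = 0 := by
    apply span_isotropic
    rintro a ⟨A, hA, rfl⟩ b ⟨Bb, hB, rfl⟩
    rw [beta_phi_eq_zero_iff]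
    exact hpair A hA Bb hB
  have hQ3 : ∀ x ∈ V, ∀ y ∈ V, ∀ z ∈ V, beta (x * y) z = 0 := by
    apply span_triple
    rintro a ⟨A, hA, rfl⟩ b ⟨Bb, hB, rfl⟩ c ⟨C, hC, rfl⟩
    rw [← phi_inter, beta_phi_eq_zero_iff]
    have := htrip A hA Bb hB C hC
    rwa [← Finset.inter_assoc] at this
  have hpow2 : 2 ^ d = 2 * 2 ^ (d - 1) := by
    rw [← pow_succ']
    congr 1
    omega
  have hpow2' : 2 ^ (d - 1) = 2 * 2 ^ (d - 2) := by
    rw [← pow_succ']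
    congr 1
    omega
  have hrankV : finrank (ZMod 2) V = d := by
    have hub : finrank (ZMod 2) V ≤ d := by
      have hVle : V ≤ beta.orthogonal V := by
        intro v hv
        rw [LinearMap.BilinForm.mem_orthogonal_iff]
        intro y hy
        exact hQ2 y hy v hv
      have h1 := Submodule.finrank_mono hVle
      rw [LinearMap.BilinForm.finrank_orthogonal beta_nondegenerate V] at h1
      have h2 : finrank (ZMod 2) (Fin n → ZMod 2) = n := by simp [Module.finrank_pi]
      rw [h2] at h1
      omega
    have hlb : d - 1 < finrank (ZMod 2) V := by
      apply rank_ge_of_card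
      omega
    omega
  have hmulV : ∀ x ∈ V, ∀ y ∈ V, x * y ∈ V := by
    intro x hx y hy
    apply mem_of_orth V hQ1 hQ2 hrankV
    · exact fun z hz => hQ3 x hx y hy z hz
    · rw [beta_one_mul]
      exact hQ2 x hx y hy
  obtain ⟨B, hBcard, hBdisj, hBV, hBdecomp, hBcover⟩ := structure_thm V hQ1 hmulV hrankV
  have hsupV : ∀ S : Finset (Fin d), phi (S.sup B) ∈ V := by
    intro S
    rw [phi_sup_sum S B (fun a _ b _ hab => hBdisj a b hab)]
    exact Submodule.sum_mem V (fun i _ => hBV i)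
  have hℬV : ∀ A ∈ ℬ, phi A ∈ V := by
    intro A hA
    exact Submodule.subset_span ⟨A, hA, rfl⟩
  -- span of ℬ minus a small set is still V
  have hspan_diff : ∀ C : Finset (Finset (Fin n)), C.card ≤ k - 2 →
      Submodule.span (ZMod 2) (phi '' ((ℬ \ C : Finset (Finset (Fin n))) : Set (Finset (Fin n)))) = V := by
    intro C hC
    set W := Submodule.span (ZMod 2)
      (phi '' ((ℬ \ C : Finset (Finset (Fin n))) : Set (Finset (Fin n)))) with hW
    have hle : W ≤ V := by
      apply Submodule.span_mono
      apply Set.image_mono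
      intro x hx
      rw [Finset.coe_sdiff] at hx
      exact hx.1
    have hcardlb : 2 ^ (d - 1) < (ℬ \ C).card := by
      have h1 : ℬ.card ≤ (ℬ \ C).card + C.card := by
        have hsub : ℬ ⊆ (ℬ \ C) ∪ C := by
          intro x hx
          rw [Finset.mem_union, Finset.mem_sdiff]
          by_cases h : x ∈ C
          · exact Or.inr h
          · exact Or.inl ⟨hx, h⟩
        exact le_trans (Finset.card_le_card hsub) (Finset.card_union_le _ _)
      omega
    have hlb : d - 1 < finrank (ZMod 2) W := rank_ge_of_card hcardlb
    apply Submodule.eq_of_le_of_finrank_le hle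
    rw [hrankV]
    omega
  -- the chain, parameterized by an absorption property
  have chain : (∀ T : Finset (Fin n), (∀ y ∈ V, beta (phi T) y = 0) →
      (∃ C₁ ∈ ℬ, T ⊆ C₁) → phi T ∈ V) →
      ∀ t m, 1 ≤ m → m ≤ k - 1 → k - 1 ≤ m + t →
      ∀ A ∈ 𝒜, A ∉ ℬ → ∀ C, C ⊆ ℬ → C.card = m →
      Even ((insert A C).inf id).card := by
    intro habs t
    induction t with
    | zero =>
      intro m hm1 hm2 hm3 A hA hAB C hCB hCcard
      have hm : m = k - 1 := by omega
      have hAC : A ∉ C := fun h => hAB (hCB h)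
      apply hkwise (insert A C) (Finset.insert_subset hA (hCB.trans hℬ𝒜))
      rw [Finset.card_insert_of_notMem hAC, hCcard]
      omega
    | succ t IH =>
      intro m hm1 hm2 hm3 A hA hAB C hCB hCcard
      by_cases ht : k - 1 ≤ m + t
      · exact IH m hm1 hm2 ht A hA hAB C hCB hCcard
      push_neg at ht
      have hm2' : m + 1 ≤ k - 1 := by omega
      have hmk2 : m ≤ k - 2 := by omega
      have hAC : A ∉ C := fun h => hAB (hCB h)
      set T := (insert A C).inf id with hT
      have horth : ∀ y ∈ V, beta (phi T) y = 0 := by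
        rw [← hspan_diff C (by omega)]
        apply orth_span
        rintro y ⟨D, hD, rfl⟩
        rw [Finset.coe_sdiff] at hD
        obtain ⟨hDℬ, hDC⟩ := hD
        rw [Finset.mem_coe] at hDℬ hDC
        rw [beta_phi_eq_zero_iff]
        have hDA : A ≠ D := fun h => hAB (h ▸ hDℬ)
        have hkey : (insert A (insert D C)).inf id = T ∩ D := by
          rw [hT]
          ext i
          simp only [Finset.inf_insert, Finset.mem_inter, id, Finset.inf_eq_inter]
          tauto
        have heven := IH (m + 1) (by omega) hm2' (by omega) A hA hAB (insert D C)
          (Finset.insert_subset hDℬ hCB)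
          (by rw [Finset.card_insert_of_notMem hDC, hCcard])
        rwa [hkey] at heven
      have hTV : phi T ∈ V := by
        apply habs T horth
        have hCne : C.Nonempty := Finset.card_pos.mp (by omega)
        obtain ⟨C₁, hC₁⟩ := hCne
        refine ⟨C₁, hCB hC₁, ?_⟩
        have h := Finset.inf_le (s := insert A C) (f := id) (Finset.mem_insert_of_mem hC₁)
        exact h
      exact card_even_of hQ1 hTV
  -- orthogonality of every member of 𝒜 to V, given absorption
  have hmain : (∀ T : Finset (Fin n), (∀ y ∈ V, beta (phi T) y = 0) →
      (∃ C₁ ∈ ℬ, T ⊆ C₁) → phi T ∈ V) →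
      ∀ A ∈ 𝒜, ∀ y ∈ V, beta (phi A) y = 0 := by
    intro habs A hA
    by_cases hAB : A ∈ ℬ
    · exact fun y hy => hQ2 (phi A) (hℬV A hAB) y hy
    · apply orth_span
      rintro y ⟨D, hD, rfl⟩
      rw [Finset.mem_coe] at hD
      rw [beta_phi_eq_zero_iff]
      have heven := chain habs (k - 2) 1 le_rfl (by omega) (by omega) A hA hAB {D}
        (by simpa using hD) (Finset.card_singleton D)
      have hkey : (insert A ({D} : Finset (Finset (Fin n)))).inf id = A ∩ D := by
        rw [Finset.inf_insert, Finset.inf_singleton]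
        rfl
      rwa [hkey] at heven
  refine ⟨B, hBcard, hBdisj, ?_, ?_⟩
  · -- even case
    intro hpar A hA
    have habs : ∀ T : Finset (Fin n), (∀ y ∈ V, beta (phi T) y = 0) →
        (∃ C₁ ∈ ℬ, T ⊆ C₁) → phi T ∈ V :=
      fun T hT _ => mem_of_orth_even hQ2 hrankV hpar (phi T) hT
    have hAV : phi A ∈ V := mem_of_orth_even hQ2 hrankV hpar (phi A) (hmain habs A hA)
    obtain ⟨S, hS⟩ := hBdecomp (phi A) hAV
    exact ⟨S, phi_injective hS⟩
  · -- odd case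
    intro hpar
    have hcover : ((Finset.univ : Finset (Fin d)).sup B).card = 2 * d := by
      rw [Finset.sup_eq_biUnion, Finset.card_biUnion
        (fun a _ b _ hab => hBdisj a b hab)]
      rw [Finset.sum_congr rfl (fun i _ => hBcard i), Finset.sum_const, Finset.card_univ,
        Fintype.card_fin]
      ring
    have hcompl : ((Finset.univ : Finset (Fin d)).sup B)ᶜ.card = 1 := by
      rw [Finset.card_compl, hcover]
      simp only [Fintype.card_fin]
      rcases hpar with ⟨c, hc⟩
      omega
    obtain ⟨istar, histar⟩ := Finset.card_eq_one.mp hcompl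
    have histmem : istar ∈ ((Finset.univ : Finset (Fin d)).sup B)ᶜ := by
      rw [histar]; exact Finset.mem_singleton_self istar
    have hinotsup : istar ∉ (Finset.univ : Finset (Fin d)).sup B :=
      Finset.mem_compl.mp histmem
    have histnotB : ∀ j, istar ∉ B j := by
      intro j hj
      have h : B j ⊆ (Finset.univ : Finset (Fin d)).sup B := Finset.le_sup (Finset.mem_univ j)
      exact hinotsup (h hj)
    have histnotsup : ∀ S : Finset (Fin d), istar ∉ S.sup B := by
      intro S hj
      rw [Finset.mem_sup] at hj
      obtain ⟨j, _, hj⟩ := hj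
      exact histnotB j hj
    have hist : ∀ v ∈ V, v istar = 0 := by
      intro v hv
      obtain ⟨S, rfl⟩ := hBdecomp v hv
      rw [phi_apply, if_neg (histnotsup S)]
    have habs : ∀ T : Finset (Fin n), (∀ y ∈ V, beta (phi T) y = 0) →
        (∃ C₁ ∈ ℬ, T ⊆ C₁) → phi T ∈ V := by
      rintro T hT ⟨C₁, hC₁ℬ, hTC₁⟩
      apply mem_of_orth_odd hQ2 hrankV hpar istar hist (phi T) hT
      rw [phi_apply, if_neg]
      intro hmem
      have h0 := hist (phi C₁) (hℬV C₁ hC₁ℬ)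
      rw [phi_apply, if_pos (hTC₁ hmem)] at h0
      exact one_ne_zero h0
    have hdichot : ∀ A ∈ 𝒜, (∃ S : Finset (Fin d), A = S.sup B) ∨
        (∃ S : Finset (Fin d), A = insert istar (S.sup B)) := by
      intro A hA
      by_cases hi : istar ∈ A
      · right
        set A' := A.erase istar with hA'
        have hsub : ({istar} : Finset (Fin n)) ⊆ A := by simpa using hi
        have hphiA' : phi A' = phi A + phi {istar} := by
          rw [hA', Finset.erase_eq, phi_sdiff hsub]
        have hsingle_single : (phi ({istar} : Finset (Fin n))) = Pi.single istar 1 := by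
          funext i
          rw [phi_apply, Pi.single_apply]
          simp [eq_comm]
        have horth' : ∀ y ∈ V, beta (phi A') y = 0 := by
          intro y hy
          rw [hphiA', map_add, LinearMap.add_apply, hmain habs A hA y hy,
            hsingle_single, beta_single, hist y hy]
          simp
        have hA'V : phi A' ∈ V := by
          apply mem_of_orth_odd hQ2 hrankV hpar istar hist (phi A') horth'
          rw [phi_apply, if_neg (Finset.notMem_erase istar A)]
        obtain ⟨S, hS⟩ := hBdecomp (phi A') hA'V
        refine ⟨S, ?_⟩
        rw [← phi_injective hS, hA', Finset.insert_erase hi]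
      · left
        have hAV : phi A ∈ V := by
          apply mem_of_orth_odd hQ2 hrankV hpar istar hist (phi A) (hmain habs A hA)
          rw [phi_apply, if_neg hi]
        obtain ⟨S, hS⟩ := hBdecomp (phi A) hAV
        exact ⟨S, phi_injective hS⟩
    refine ⟨istar, histnotB, hdichot, ?_⟩
    -- at most k - 1 members contain istar
    by_contra hcount
    push_neg at hcount
    have hk' : k ≤ (𝒜.filter fun A => istar ∈ A).card := by omega
    obtain ⟨S, hSsub, hScard⟩ := Finset.exists_subset_card_eq hk'
    have hSne : S.Nonempty := Finset.card_pos.mp (by omega)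
    have hSstruct : ∀ A ∈ S, ∃ C : Finset (Fin n), phi C ∈ V ∧ istar ∉ C ∧
        A = insert istar C := by
      intro A hAS
      have hAf := hSsub hAS
      rw [Finset.mem_filter] at hAf
      rcases hdichot A hAf.1 with ⟨SA, hSA⟩ | ⟨SA, hSA⟩
      · exact absurd (hSA ▸ hAf.2) (histnotsup SA)
      · exact ⟨SA.sup B, hsupV SA, histnotsup SA, hSA⟩
    obtain ⟨R, hRV, hRi, hR⟩ := inf_insert_istar hmulV istar S hSne hSstruct
    have heven := hkwise S (hSsub.trans (Finset.filter_subset _ _)) hScard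
    rw [hR, Finset.card_insert_of_notMem hRi] at heven
    have hReven : Even R.card := card_even_of hQ1 hRV
    rw [Nat.even_add_one] at heven
    exact heven hReven
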